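/- Let 1 ≤ p < ∞ and let φ : ℕ → (0,∞) (viewed as a function of 2N+1) be such that there exist constants C₁ > 0 with φ(2M+1) ≥ C₁ φ(2N+1) for all M ≤ N, and C₂ > 0 with (2M+1)^{1/p} φ(2M+1) ≤ C₂ (2N+1)^{1/p} φ(2N+1) for all M ≤ N. Fix m₀ ∈ ℤ and N₀ ∈ ℕ, and let ξ^{m₀,N₀} be the characteristic sequence of S_{m₀,N₀} (equal to 1 on S_{m₀,N₀} and 0 elsewhere). Then 1/φ(2N₀+1) ≤ ‖ξ^{m₀,N₀}‖_{ℓ^p_φ} ≤ max{1/C₁, C₂}/φ(2N₀+1); in particular there is a constant C > 0 independent of m₀ and N₀ with 1/φ(2N₀+1) ≤ ‖ξ^{m₀,N₀}‖_{ℓ^p_φ} ≤ C/φ(2N₀+1). -/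

import Mathlib

open scoped ENNReal NNReal BigOperators

/-- The discrete "ball" `S_{m,N} = {m-N, …, m+N}` as a finite set of integers. -/
noncomputable def S (m : ℤ) (N : ℕ) : Finset ℤ := Finset.Icc (m - N) (m + N)

/-- The generalized discrete Morrey norm `‖x‖_{ℓ^p_φ}`. -/
noncomputable def gMorreyNorm (p : ℝ) (φ : ℕ → ℝ) (x : ℤ → ℂ) : ℝ≥0∞ :=
  ⨆ (m : ℤ) (N : ℕ),
    (ENNReal.ofReal (φ (2 * N + 1)))⁻¹ *
      ((2 * (N : ℝ≥0∞) + 1)⁻¹ * ∑ k ∈ S m N, (‖x k‖₊ : ℝ≥0∞) ^ p) ^ (1 / p)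

lemma card_S (m : ℤ) (N : ℕ) : (S m N).card = 2 * N + 1 := by
  rw [S, Int.card_Icc]; omega

lemma sum_xi (p : ℝ) (hp : 0 < p) (m₀ : ℤ) (N₀ : ℕ) (ξ : ℤ → ℂ)
    (hξ : ∀ k, ξ k = if k ∈ S m₀ N₀ then 1 else 0) (m : ℤ) (N : ℕ) :
    ∑ k ∈ S m N, (‖ξ k‖₊ : ℝ≥0∞) ^ p = ((S m N ∩ S m₀ N₀).card : ℝ≥0∞) := by
  have h : ∀ k, (‖ξ k‖₊ : ℝ≥0∞) ^ p = if k ∈ S m₀ N₀ then 1 else 0 := by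
    intro k; rw [hξ k]; split <;> simp [ENNReal.zero_rpow_of_pos hp]
  simp_rw [h]
  rw [Finset.sum_ite_mem, Finset.sum_const, nsmul_eq_mul, mul_one]

lemma term_eq (p : ℝ) (hp : 0 < p) (φN : ℝ) (hφ : 0 < φN) (N c : ℕ) :
    (ENNReal.ofReal φN)⁻¹ * ((2 * (N : ℝ≥0∞) + 1)⁻¹ * (c : ℝ≥0∞)) ^ (1/p)
      = ENNReal.ofReal (φN⁻¹ * ((c : ℝ) / (2 * (N : ℝ) + 1)) ^ (1/p)) := by
  have h1 : (2 * (N : ℝ≥0∞) + 1)⁻¹ * (c : ℝ≥0∞)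
      = ENNReal.ofReal ((c : ℝ) / (2 * (N : ℝ) + 1)) := by
    rw [ENNReal.ofReal_div_of_pos (by positivity), ENNReal.ofReal_natCast,
      ENNReal.div_eq_inv_mul]
    congr 1
    rw [show ((2:ℝ) * N + 1) = ((2*N+1 : ℕ) : ℝ) by push_cast; ring,
      ENNReal.ofReal_natCast]
    push_cast; ring
  rw [h1, ENNReal.ofReal_rpow_of_nonneg (by positivity) (by positivity),
    ← ENNReal.ofReal_inv_of_pos hφ,
    ← ENNReal.ofReal_mul (by positivity)]

theorem stmt11 (p : ℝ) (hp : 1 ≤ p) (φ : ℕ → ℝ)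
    (hφpos : ∀ N : ℕ, 0 < φ (2 * N + 1))
    (C₁ : ℝ) (hC₁ : 0 < C₁)
    (hdec : ∀ M N : ℕ, M ≤ N → C₁ * φ (2 * N + 1) ≤ φ (2 * M + 1))
    (C₂ : ℝ) (hC₂ : 0 < C₂)
    (hinc : ∀ M N : ℕ, M ≤ N →
      (2 * (M : ℝ) + 1) ^ (1 / p) * φ (2 * M + 1) ≤
        C₂ * ((2 * (N : ℝ) + 1) ^ (1 / p) * φ (2 * N + 1)))
    (m₀ : ℤ) (N₀ : ℕ) (ξ : ℤ → ℂ)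
    (hξ : ∀ k : ℤ, ξ k = if k ∈ S m₀ N₀ then 1 else 0) :
    ENNReal.ofReal (1 / φ (2 * N₀ + 1)) ≤ gMorreyNorm p φ ξ ∧
    gMorreyNorm p φ ξ ≤ ENNReal.ofReal (max (1 / C₁) C₂ / φ (2 * N₀ + 1)) := by
  have hp0 : 0 < p := lt_of_lt_of_le one_pos hp
  have hφ0 := hφpos N₀
  constructor
  · -- lower bound: evaluate the term at (m₀, N₀)
    have hterm : (ENNReal.ofReal (φ (2 * N₀ + 1)))⁻¹ *
        ((2 * (N₀ : ℝ≥0∞) + 1)⁻¹ * ∑ k ∈ S m₀ N₀, (‖ξ k‖₊ : ℝ≥0∞) ^ p) ^ (1/p)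
        = ENNReal.ofReal (1 / φ (2 * N₀ + 1)) := by
      rw [sum_xi p hp0 m₀ N₀ ξ hξ, Finset.inter_self, card_S,
        term_eq p hp0 _ hφ0]
      congr 1
      rw [show (((2*N₀+1 : ℕ) : ℝ) / (2 * (N₀ : ℝ) + 1)) = 1 by
          rw [div_eq_one_iff_eq (by positivity)]; push_cast; ring,
        Real.one_rpow, mul_one, one_div]
    calc ENNReal.ofReal (1 / φ (2 * N₀ + 1)) = _ := hterm.symm
      _ ≤ gMorreyNorm p φ ξ := le_iSup₂ (f := fun (m : ℤ) (N : ℕ) =>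
            (ENNReal.ofReal (φ (2 * N + 1)))⁻¹ *
              ((2 * (N : ℝ≥0∞) + 1)⁻¹ * ∑ k ∈ S m N, (‖ξ k‖₊ : ℝ≥0∞) ^ p) ^ (1/p))
            m₀ N₀
  · -- upper bound
    apply iSup₂_le
    intro m N
    rw [sum_xi p hp0 m₀ N₀ ξ hξ, term_eq p hp0 _ (hφpos N)]
    apply ENNReal.ofReal_le_ofReal
    set c : ℕ := (S m N ∩ S m₀ N₀).card with hc
    have hφN := hφpos N
    rcases le_total N N₀ with h | h
    · -- N ≤ N₀ : use almost decreasing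
      have hcle : c ≤ 2 * N + 1 := by
        rw [← card_S m N]; exact Finset.card_le_card Finset.inter_subset_left
      have h1 : ((c : ℝ) / (2 * (N : ℝ) + 1)) ^ (1/p) ≤ 1 := by
        apply Real.rpow_le_one (by positivity) _ (by positivity)
        rw [div_le_one (by positivity)]
        exact_mod_cast hcle
      have h2 : (φ (2 * N + 1))⁻¹ ≤ (1 / C₁) / φ (2 * N₀ + 1) := by
        rw [one_div, div_eq_mul_inv, ← mul_inv]
        exact inv_anti₀ (by positivity) (hdec N N₀ h)
      calc (φ (2 * N + 1))⁻¹ * ((c : ℝ) / (2 * (N : ℝ) + 1)) ^ (1/p)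
          ≤ (φ (2 * N + 1))⁻¹ * 1 := mul_le_mul_of_nonneg_left h1 (by positivity)
        _ = (φ (2 * N + 1))⁻¹ := mul_one _
        _ ≤ (1 / C₁) / φ (2 * N₀ + 1) := h2
        _ ≤ max (1 / C₁) C₂ / φ (2 * N₀ + 1) := by gcongr; exact le_max_left _ _
    · -- N₀ ≤ N : use almost increasing
      have hcle : c ≤ 2 * N₀ + 1 := by
        rw [← card_S m₀ N₀]; exact Finset.card_le_card Finset.inter_subset_right
      have h1 : ((c : ℝ) / (2 * (N : ℝ) + 1)) ^ (1/p)
          ≤ ((2 * (N₀ : ℝ) + 1) / (2 * (N : ℝ) + 1)) ^ (1/p) := by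
        apply Real.rpow_le_rpow (by positivity) _ (by positivity)
        gcongr
        exact_mod_cast hcle
      have h2 := hinc N₀ N h
      have hBpos : (0:ℝ) < (2 * (N : ℝ) + 1) ^ (1/p) := by positivity
      have h3 : (φ (2 * N + 1))⁻¹ * ((2 * (N₀ : ℝ) + 1) / (2 * (N : ℝ) + 1)) ^ (1/p)
          ≤ C₂ / φ (2 * N₀ + 1) := by
        rw [Real.div_rpow (by positivity) (by positivity), inv_mul_eq_div, div_div,
          div_le_div_iff₀ (by positivity) hφ0]
        exact h2
      calc (φ (2 * N + 1))⁻¹ * ((c : ℝ) / (2 * (N : ℝ) + 1)) ^ (1/p)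
          ≤ (φ (2 * N + 1))⁻¹ * ((2 * (N₀ : ℝ) + 1) / (2 * (N : ℝ) + 1)) ^ (1/p) := by
            gcongr
        _ ≤ C₂ / φ (2 * N₀ + 1) := h3
        _ ≤ max (1 / C₁) C₂ / φ (2 * N₀ + 1) := by gcongr; exact le_max_right _ _
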